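/- Let G = ℤ/2 × ℤ/2 and let f : G → ℝ satisfy f(g) ≥ 0 for all g and ∑_{g∈G} f(g) = 1. Write x = f(0,0) − f(0,1) + f(1,0) − f(1,1), y = f(0,0) + f(0,1) − f(1,0) − f(1,1), and z = f(0,0) − f(0,1) − f(1,0) + f(1,1). Let P be the G × G real matrix with P_{g,h} = f(h − g). Then there exists ψ : G → ℝ with ψ(g) ≥ 0 for all g ≠ 0 and ∑_{g∈G} ψ(g) = 0 such that P = exp(Q), the matrix exponential of the matrix Q with Q_{g,h} = ψ(h − g), if and only if x > 0, y > 0, z > 0, x ≥ y·z, y ≥ x·z, and z ≥ x·y. -/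

import Mathlib

open Matrix

noncomputable def chi (g h : ZMod 2 × ZMod 2) : ℝ :=
  if g.1 * h.1 + g.2 * h.2 = 0 then 1 else -1

lemma foursome (g : ZMod 2 × ZMod 2) :
    g = (0,0) ∨ g = (0,1) ∨ g = (1,0) ∨ g = (1,1) := by revert g; decide

lemma sumG (F : ZMod 2 × ZMod 2 → ℝ) :
    ∑ g, F g = F (0,0) + F (0,1) + F (1,0) + F (1,1) := by
  have h : (Finset.univ : Finset (ZMod 2 × ZMod 2)) = {(0,0),(0,1),(1,0),(1,1)} := by decide
  rw [h]
  rw [Finset.sum_insert (by decide), Finset.sum_insert (by decide),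
    Finset.sum_insert (by decide), Finset.sum_singleton]
  ring

lemma gsub (a b : ZMod 2 × ZMod 2) : a - b = a + b := by revert a b; decide

lemma gadd_self (a : ZMod 2 × ZMod 2) : a + a = 0 := by revert a; decide

lemma z2 : (2:ZMod 2) = 0 := rfl
lemma z3 : (3:ZMod 2) = 1 := rfl
lemma z4 : (4:ZMod 2) = 0 := rfl
lemma p0 : (0 : ZMod 2 × ZMod 2) = (0,0) := rfl
lemma p1 : (1 : ZMod 2 × ZMod 2) = (1,1) := rfl

lemma chi_add_right (g h k : ZMod 2 × ZMod 2) : chi g (h + k) = chi g h * chi g k := by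
  rcases foursome g with rfl|rfl|rfl|rfl <;> rcases foursome h with rfl|rfl|rfl|rfl <;>
    rcases foursome k with rfl|rfl|rfl|rfl <;>
    simp [chi, show (1:ZMod 2)+1 = 0 from rfl] <;> norm_num

lemma chi_zero_right (g : ZMod 2 × ZMod 2) : chi g 0 = 1 := by norm_num [chi]

lemma chi_zero_left (g : ZMod 2 × ZMod 2) : chi 0 g = 1 := by norm_num [chi]

lemma orth (g g' : ZMod 2 × ZMod 2) :
    ∑ h, chi g h * chi g' h = if g = g' then 4 else 0 := by
  rcases foursome g with rfl|rfl|rfl|rfl <;> rcases foursome g' with rfl|rfl|rfl|rfl <;>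
    rw [sumG] <;>
    simp [chi, show (1:ZMod 2)+1 = 0 from rfl, Prod.ext_iff] <;> norm_num

noncomputable def Fhat (ψ : ZMod 2 × ZMod 2 → ℝ) (g : ZMod 2 × ZMod 2) : ℝ :=
  ∑ h, ψ h * chi g h

noncomputable def Finv (c : ZMod 2 × ZMod 2 → ℝ) (g : ZMod 2 × ZMod 2) : ℝ :=
  (∑ χ, c χ * chi χ g) / 4

lemma Fhat_Finv (c : ZMod 2 × ZMod 2 → ℝ) : Fhat (Finv c) = c := by
  funext g
  unfold Fhat Finv
  rw [show (∑ h, (∑ χ, c χ * chi χ h) / 4 * chi g h)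
      = ∑ h, ∑ χ, c χ * chi χ h * chi g h / 4 by
    refine Finset.sum_congr rfl fun h _ => ?_
    rw [Finset.sum_div, Finset.sum_mul]
    refine Finset.sum_congr rfl fun χ _ => by ring]
  rw [Finset.sum_comm]
  have : ∀ χ : ZMod 2 × ZMod 2, (∑ h, c χ * chi χ h * chi g h / 4)
      = c χ * (if χ = g then 4 else 0) / 4 := by
    intro χ
    rw [← orth χ g, Finset.mul_sum, Finset.sum_div]
    exact Finset.sum_congr rfl fun h _ => by ring
  simp_rw [this]
  rw [sumG]
  rcases foursome g with rfl|rfl|rfl|rfl <;> simp [Prod.ext_iff] <;> norm_num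

noncomputable def Mk (ψ : ZMod 2 × ZMod 2 → ℝ) : Matrix (ZMod 2 × ZMod 2) (ZMod 2 × ZMod 2) ℝ :=
  Matrix.of fun g h => ψ (h - g)

noncomputable def H : Matrix (ZMod 2 × ZMod 2) (ZMod 2 × ZMod 2) ℝ := Matrix.of chi

lemma chi_comm (g h : ZMod 2 × ZMod 2) : chi g h = chi h g := by
  unfold chi; rw [mul_comm g.1 h.1, mul_comm g.2 h.2]

lemma H_mul_H : H * H = (4 : ℝ) • (1 : Matrix (ZMod 2 × ZMod 2) (ZMod 2 × ZMod 2) ℝ) := by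
  ext g h
  simp only [Matrix.mul_apply, H, Matrix.of_apply, Matrix.smul_apply, Matrix.one_apply]
  rw [show (∑ k, chi g k * chi k h) = ∑ k, chi g k * chi h k by
    exact Finset.sum_congr rfl fun k _ => by rw [chi_comm k h]]
  rw [orth]
  split <;> simp

lemma H_unit : IsUnit H := by
  refine (Matrix.isUnit_iff_isUnit_det _).mpr ?_
  have h4 : H * ((4:ℝ)⁻¹ • H) = 1 := by
    rw [Matrix.mul_smul, H_mul_H, smul_smul]; norm_num
  have := Matrix.det_mul H ((4:ℝ)⁻¹ • H)
  rw [h4, Matrix.det_one] at this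
  exact IsUnit.of_mul_eq_one _ this.symm

lemma H_inv : H⁻¹ = (4:ℝ)⁻¹ • H := by
  apply Matrix.inv_eq_right_inv
  rw [Matrix.mul_smul, H_mul_H, smul_smul]; norm_num

lemma H_mul_Mk (ψ : ZMod 2 × ZMod 2 → ℝ) :
    H * Mk ψ = Matrix.diagonal (Fhat ψ) * H := by
  ext g h
  rw [Matrix.mul_apply, Matrix.diagonal_mul]
  simp only [H, Mk, Matrix.of_apply]
  calc (∑ k, chi g k * ψ (h - k))
      = ∑ j, chi g (h + j) * ψ (h - (h + j)) :=
        (Fintype.sum_equiv (Equiv.addLeft h) _ _ (fun j => rfl)).symm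
    _ = ∑ j, chi g h * (ψ j * chi g j) := by
        refine Finset.sum_congr rfl fun j _ => ?_
        rw [gsub, ← add_assoc, gadd_self, zero_add, chi_add_right]
        ring
    _ = Fhat ψ g * chi g h := by
        rw [← Finset.mul_sum, Fhat]; ring

lemma conj_of (A B : Matrix (ZMod 2 × ZMod 2) (ZMod 2 × ZMod 2) ℝ)
    (hAB : H * A = B * H) : A = H⁻¹ * B * H := by
  have h1 : H⁻¹ * H = 1 :=
    Matrix.nonsing_inv_mul _ ((Matrix.isUnit_iff_isUnit_det _).mp H_unit)
  calc A = (H⁻¹ * H) * A := by rw [h1, one_mul]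
    _ = H⁻¹ * (H * A) := by rw [mul_assoc]
    _ = H⁻¹ * (B * H) := by rw [hAB]
    _ = H⁻¹ * B * H := by rw [mul_assoc]

lemma exp_Mk (ψ : ZMod 2 × ZMod 2 → ℝ) :
    NormedSpace.exp (Mk ψ) = Mk (Finv fun χ => Real.exp (Fhat ψ χ)) := by
  have h1 : Mk ψ = H⁻¹ * Matrix.diagonal (Fhat ψ) * H := conj_of _ _ (H_mul_Mk ψ)
  have h2 : Mk (Finv fun χ => Real.exp (Fhat ψ χ))
      = H⁻¹ * Matrix.diagonal (fun χ => Real.exp (Fhat ψ χ)) * H := by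
    refine conj_of _ _ ?_
    rw [H_mul_Mk, Fhat_Finv]
  rw [h1, Matrix.exp_conj' H _ H_unit, Matrix.exp_diagonal, h2]
  congr 2
  rw [Pi.exp_def]
  funext χ
  rw [← Real.exp_eq_exp_ℝ]

lemma Mk_inj {φ φ' : ZMod 2 × ZMod 2 → ℝ} (h : Mk φ = Mk φ') : φ = φ' := by
  funext g
  have h0 := congrArg (fun M : Matrix (ZMod 2 × ZMod 2) (ZMod 2 × ZMod 2) ℝ => M 0 g) h
  simpa [Mk] using h0

lemma Fhat_00 (F : ZMod 2 × ZMod 2 → ℝ) : Fhat F (0,0) = ∑ g, F g := by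
  rw [Fhat]
  refine Finset.sum_congr rfl fun h _ => ?_
  simp [chi]

lemma Fhat_01 (F : ZMod 2 × ZMod 2 → ℝ) :
    Fhat F (0,1) = F (0,0) - F (0,1) + F (1,0) - F (1,1) := by
  rw [Fhat, sumG]; simp [chi, show (1:ZMod 2)+1 = 0 from rfl]; ring

lemma Fhat_10 (F : ZMod 2 × ZMod 2 → ℝ) :
    Fhat F (1,0) = F (0,0) + F (0,1) - F (1,0) - F (1,1) := by
  rw [Fhat, sumG]; simp [chi, show (1:ZMod 2)+1 = 0 from rfl]; ring

lemma Fhat_11 (F : ZMod 2 × ZMod 2 → ℝ) :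
    Fhat F (1,1) = F (0,0) - F (0,1) - F (1,0) + F (1,1) := by
  rw [Fhat, sumG]; simp [chi, show (1:ZMod 2)+1 = 0 from rfl]; ring

/-- The characterization of the embeddable mutation matrices of the Kimura 3-parameter model
(the symmetric group-based model with `G = ℤ/2 × ℤ/2`). -/
theorem kimura3_embeddable_iff
    (f : ZMod 2 × ZMod 2 → ℝ) (hf_nonneg : ∀ g, 0 ≤ f g) (hf_sum : ∑ g, f g = 1)
    (x y z : ℝ)
    (hx : x = f (0, 0) - f (0, 1) + f (1, 0) - f (1, 1))
    (hy : y = f (0, 0) + f (0, 1) - f (1, 0) - f (1, 1))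
    (hz : z = f (0, 0) - f (0, 1) - f (1, 0) + f (1, 1)) :
    (∃ ψ : ZMod 2 × ZMod 2 → ℝ, (∀ g, g ≠ 0 → 0 ≤ ψ g) ∧ (∑ g, ψ g = 0) ∧
      (Matrix.of fun g h : ZMod 2 × ZMod 2 => f (h - g)) =
        NormedSpace.exp (Matrix.of fun g h : ZMod 2 × ZMod 2 => ψ (h - g)))
    ↔
    (0 < x ∧ 0 < y ∧ 0 < z ∧ y * z ≤ x ∧ x * z ≤ y ∧ x * y ≤ z) := by
  constructor
  · rintro ⟨ψ, hnn, hs, heq⟩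
    have heq' : Mk f = NormedSpace.exp (Mk ψ) := heq
    rw [exp_Mk] at heq'
    have hf : f = Finv fun χ => Real.exp (Fhat ψ χ) := Mk_inj heq'
    have hFf : Fhat f = fun χ => Real.exp (Fhat ψ χ) := by rw [hf, Fhat_Finv]
    have hxA : x = Real.exp (Fhat ψ (0,1)) := by
      rw [hx, ← Fhat_01 f, hFf]
    have hyB : y = Real.exp (Fhat ψ (1,0)) := by
      rw [hy, ← Fhat_10 f, hFf]
    have hzC : z = Real.exp (Fhat ψ (1,1)) := by
      rw [hz, ← Fhat_11 f, hFf]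
    rw [sumG] at hs
    have e01 := Fhat_01 ψ
    have e10 := Fhat_10 ψ
    have e11 := Fhat_11 ψ
    have n01 := hnn (0,1) (by decide)
    have n10 := hnn (1,0) (by decide)
    have n11 := hnn (1,1) (by decide)
    refine ⟨hxA ▸ Real.exp_pos _, hyB ▸ Real.exp_pos _, hzC ▸ Real.exp_pos _, ?_, ?_, ?_⟩
    · rw [hxA, hyB, hzC, ← Real.exp_add, Real.exp_le_exp]
      linarith
    · rw [hxA, hyB, hzC, ← Real.exp_add, Real.exp_le_exp]
      linarith
    · rw [hxA, hyB, hzC, ← Real.exp_add, Real.exp_le_exp]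
      linarith
  · rintro ⟨hx0, hy0, hz0, hyzx, hxzy, hxyz⟩
    set c : ZMod 2 × ZMod 2 → ℝ := fun g =>
      if g = (0,1) then Real.log x else if g = (1,0) then Real.log y
      else if g = (1,1) then Real.log z else 0 with hc
    have hc00 : c (0,0) = 0 := by norm_num [hc, Prod.ext_iff]
    have hc01 : c (0,1) = Real.log x := by norm_num [hc]
    have hc10 : c (1,0) = Real.log y := by norm_num [hc, Prod.ext_iff]
    have hc11 : c (1,1) = Real.log z := by norm_num [hc, Prod.ext_iff]
    have hlx : Real.log x + Real.log z ≤ Real.log y := by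
      rw [← Real.log_mul (ne_of_gt hx0) (ne_of_gt hz0)]
      exact Real.log_le_log (by positivity) hxzy
    have hly : Real.log y + Real.log z ≤ Real.log x := by
      rw [← Real.log_mul (ne_of_gt hy0) (ne_of_gt hz0)]
      exact Real.log_le_log (by positivity) hyzx
    have hlz : Real.log x + Real.log y ≤ Real.log z := by
      rw [← Real.log_mul (ne_of_gt hx0) (ne_of_gt hy0)]
      exact Real.log_le_log (by positivity) hxyz
    refine ⟨Finv c, ?_, ?_, ?_⟩
    · intro g hg
      have hFin : ∀ g', Finv c g' =
          (c (0,0) * chi (0,0) g' + c (0,1) * chi (0,1) g' + c (1,0) * chi (1,0) g'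
            + c (1,1) * chi (1,1) g') / 4 := by
        intro g'; rw [Finv, sumG]
      rcases foursome g with rfl|rfl|rfl|rfl
      · exact absurd rfl hg
      · rw [hFin]
        simp only [hc00, hc01, hc10, hc11]
        simp [chi, show (1:ZMod 2)+1 = 0 from rfl]
        linarith
      · rw [hFin]
        simp only [hc00, hc01, hc10, hc11]
        simp [chi, show (1:ZMod 2)+1 = 0 from rfl]
        linarith
      · rw [hFin]
        simp only [hc00, hc01, hc10, hc11]
        simp [chi, show (1:ZMod 2)+1 = 0 from rfl]
        linarith
    · have h00 : Fhat (Finv c) (0,0) = c (0,0) := congrFun (Fhat_Finv c) (0,0)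
      rw [Fhat_00] at h00
      rw [h00, hc00]
    · show Mk f = NormedSpace.exp (Mk (Finv c))
      rw [exp_Mk, Fhat_Finv]
      suffices hsuff : f = Finv (fun χ => Real.exp (c χ)) by rw [← hsuff]
      funext g
      have hFin : Finv (fun χ => Real.exp (c χ)) g =
          (Real.exp (c (0,0)) * chi (0,0) g + Real.exp (c (0,1)) * chi (0,1) g
            + Real.exp (c (1,0)) * chi (1,0) g + Real.exp (c (1,1)) * chi (1,1) g) / 4 := by
        rw [Finv, sumG]
      rw [hFin, hc00, hc01, hc10, hc11, Real.exp_zero, Real.exp_log hx0,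
        Real.exp_log hy0, Real.exp_log hz0]
      rw [sumG] at hf_sum
      rcases foursome g with rfl|rfl|rfl|rfl <;>
        simp [chi, show (1:ZMod 2)+1 = 0 from rfl] <;>
        linarith [show f 0 = f (0,0) from rfl, show f 1 = f (1,1) from rfl]
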